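/- arXiv:2004.00259 — 2 statements merged into one kernel-verified Lean document; each statement's English description precedes it below -/
import Mathlib

section
/- (Vector-form Hoeffding inequality) Let Ψ ∈ ℂ^{K×L} be a random matrix whose rows are independent, each distributed on the unit sphere of ℂ^L (viewed as the real sphere S^{2L−1}) with zero mean. Then for any fixed nonzero ω ∈ ℂ^K and any t > 0, P(‖ω^H Ψ‖₂ ≥ t) ≤ (L+1) exp(−t²/(8‖ω‖₂²)). -/
open scoped Real ENNReal ComplexConjugate Nat
open MeasureTheory ProbabilityTheory

noncomputable def l2 {ι : Type*} [Fintype ι] (v : ι → ℂ) : ℝ :=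
  Real.sqrt (∑ i, ‖v i‖ ^ 2)


lemma hasSum_cosh_sqrt (z : ℝ) (hz : 0 ≤ z) :
    HasSum (fun n : ℕ => z ^ n / ((2*n)! : ℝ)) (Real.cosh (Real.sqrt z)) := by
  have h := Real.hasSum_cosh (Real.sqrt z)
  convert h using 2 with n
  rw [pow_mul, Real.sq_sqrt hz]

lemma convexOn_cosh_sqrt : ConvexOn ℝ (Set.Ici 0) (fun z : ℝ => Real.cosh (Real.sqrt z)) := by
  refine ⟨convex_Ici 0, fun x hx y hy a b ha hb hab => ?_⟩
  simp only [Set.mem_Ici] at hx hy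
  have hxy : 0 ≤ a • x + b • y := by
    simp only [smul_eq_mul]
    positivity
  refine hasSum_le (fun n => ?_) (hasSum_cosh_sqrt _ hxy)
    (((hasSum_cosh_sqrt x hx).mul_left a).add ((hasSum_cosh_sqrt y hy).mul_left b))
  have hpow := (convexOn_pow n).2 (Set.mem_Ici.2 hx) (Set.mem_Ici.2 hy) ha hb hab
  simp only [smul_eq_mul] at hpow ⊢
  have hfac : (0:ℝ) < ((2*n)! : ℝ) := by positivity
  calc (a*x + b*y)^n / ((2*n)! : ℝ) ≤ (a*x^n + b*y^n) / ((2*n)! : ℝ) := by gcongr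
    _ = a*(x^n/((2*n)! : ℝ)) + b*(y^n/((2*n)! : ℝ)) := by ring

lemma chord_bound {c b s : ℝ} (hc : 0 ≤ c) (hb : 0 ≤ b) (hs : |s| ≤ c * b) :
    Real.cosh (Real.sqrt (c^2 + 2*s + b^2)) ≤
      Real.cosh c * Real.cosh b + s * (Real.sinh c * Real.sinh b / (c * b)) := by
  rcases eq_or_lt_of_le (mul_nonneg hc hb) with hcb | hcb
  · have hs0 : s = 0 := by
      have := hs.trans_eq hcb.symm
      exact abs_nonpos_iff.mp this
    subst hs0
    rcases mul_eq_zero.mp hcb.symm with h | h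
    · subst h
      simp [Real.sqrt_sq hb, Real.cosh_zero]
    · subst h
      have : Real.sqrt (c^2 + 2*0 + 0^2) = c := by
        rw [show c^2 + 2*0 + 0^2 = c^2 by ring, Real.sqrt_sq hc]
      rw [this]; simp [Real.cosh_zero]
  · set θa := (c*b - s)/(2*(c*b)) with hθa
    set θb := (c*b + s)/(2*(c*b)) with hθb
    have habs := abs_le.mp hs
    have hc0' : c ≠ 0 := by rintro rfl; simp at hcb
    have hb0' : b ≠ 0 := by rintro rfl; simp at hcb
    have hθa0 : 0 ≤ θa := by
      apply div_nonneg (by linarith [habs.2]) (by linarith)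
    have hθb0 : 0 ≤ θb := by
      apply div_nonneg (by linarith [habs.1]) (by linarith)
    have hab1 : θa + θb = 1 := by
      rw [hθa, hθb]; field_simp; ring
    have hkey := convexOn_cosh_sqrt.2 (Set.mem_Ici.2 (sq_nonneg (c-b)))
      (Set.mem_Ici.2 (sq_nonneg (c+b))) hθa0 hθb0 hab1
    simp only [smul_eq_mul] at hkey
    have harg : θa * (c-b)^2 + θb * (c+b)^2 = c^2 + 2*s + b^2 := by
      rw [hθa, hθb]; field_simp; ring
    rw [harg] at hkey
    refine hkey.trans ?_
    rw [show Real.sqrt ((c-b)^2) = |c-b| from Real.sqrt_sq_eq_abs _,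
      Real.cosh_abs, Real.sqrt_sq (by linarith), Real.cosh_sub, Real.cosh_add,
      hθa, hθb]
    have : c * b ≠ 0 := ne_of_gt hcb
    field_simp
    ring_nf
    nlinarith [hcb]


variable {L : ℕ}

noncomputable def toE (L : ℕ) (v : Fin L → ℂ) : EuclideanSpace ℂ (Fin L) := (WithLp.equiv 2 _).symm v

lemma l2_eq_norm (v : Fin L → ℂ) : l2 v = ‖toE L v‖ := by
  rw [EuclideanSpace.norm_eq]
  simp [l2, toE]

lemma l2_nonneg (v : Fin L → ℂ) : 0 ≤ l2 v := Real.sqrt_nonneg _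

lemma l2_continuous : Continuous (l2 : (Fin L → ℂ) → ℝ) := by
  unfold l2
  exact Real.continuous_sqrt.comp <| continuous_finset_sum _ fun j _ =>
    (continuous_norm.comp (continuous_apply j)).pow 2

lemma toE_add (v u : Fin L → ℂ) : toE L (v + u) = toE L v + toE L u := rfl

lemma toE_sum {α : Type*} (s : Finset α) (f : α → Fin L → ℂ) :
    toE L (∑ k ∈ s, f k) = ∑ k ∈ s, toE L (f k) := by
  simp [toE, WithLp.equiv_symm_apply, WithLp.toLp_sum]

lemma inner_toE (v u : Fin L → ℂ) :
    (inner ℂ (toE L v) (toE L u) : ℂ) = ∑ j, conj (v j) * u j := by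
  simp [PiLp.inner_apply, RCLike.inner_apply, toE]
  exact Finset.sum_congr rfl fun j _ => mul_comm _ _

lemma l2_add_sq (v u : Fin L → ℂ) :
    l2 (v + u) ^ 2 = l2 v ^ 2 + 2 * (∑ j, conj (v j) * u j).re + l2 u ^ 2 := by
  rw [l2_eq_norm, l2_eq_norm, l2_eq_norm, toE_add, ← inner_toE]
  exact_mod_cast norm_add_sq (𝕜 := ℂ) (toE L v) (toE L u)

lemma abs_re_inner_le (v u : Fin L → ℂ) :
    |(∑ j, conj (v j) * u j).re| ≤ l2 v * l2 u := by
  rw [l2_eq_norm, l2_eq_norm, ← inner_toE]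
  refine (Complex.abs_re_le_norm _).trans ?_
  exact norm_inner_le_norm _ _

lemma l2_sum_le {α : Type*} (s : Finset α) (f : α → Fin L → ℂ) :
    l2 (∑ k ∈ s, f k) ≤ ∑ k ∈ s, l2 (f k) := by
  rw [l2_eq_norm, toE_sum]
  refine (norm_sum_le _ _).trans ?_
  exact le_of_eq (Finset.sum_congr rfl fun k _ => (l2_eq_norm _).symm)

lemma abs_coord_le (v : Fin L → ℂ) (j : Fin L) : ‖v j‖ ≤ l2 v := by
  rw [l2]
  have h1 : ‖v j‖ ^ 2 ≤ ∑ i, ‖v i‖ ^ 2 :=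
    Finset.single_le_sum (f := fun i => ‖v i‖ ^ 2)
      (fun i _ => by positivity) (Finset.mem_univ j)
  calc ‖v j‖ = Real.sqrt (‖v j‖ ^ 2) := by
        rw [Real.sqrt_sq (norm_nonneg _)]
    _ ≤ _ := Real.sqrt_le_sqrt h1

lemma integrable_of_bound {Ω : Type*} [MeasurableSpace Ω] (μ : Measure Ω) [IsProbabilityMeasure μ]
    (f : Ω → ℝ) (hm : Measurable f) (M : ℝ) (hM : ∀ ω, |f ω| ≤ M) : Integrable f μ := by
  refine (integrable_const M).mono' hm.aestronglyMeasurable ?_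
  filter_upwards with ω
  rw [Real.norm_eq_abs]; exact hM ω

lemma integrableC_of_bound {Ω : Type*} [MeasurableSpace Ω] (μ : Measure Ω) [IsProbabilityMeasure μ]
    (f : Ω → ℂ) (hm : Measurable f) (M : ℝ) (hM : ∀ ω, ‖f ω‖ ≤ M) : Integrable f μ := by
  refine (integrable_const (M : ℝ)).mono' hm.aestronglyMeasurable ?_
  filter_upwards with ω
  simpa using hM ω

lemma sinh_le_mul_cosh {x : ℝ} (hx : 0 ≤ x) : Real.sinh x ≤ x * Real.cosh x := by
  have h1 := Real.hasSum_sinh x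
  have h2 := (Real.hasSum_cosh x).mul_left x
  refine hasSum_le (fun n => ?_) h1 h2
  have : x * (x ^ (2*n) / ((2*n)! : ℝ)) = x ^ (2*n+1) / ((2*n)! : ℝ) := by
    rw [pow_succ]; ring
  rw [this]
  apply div_le_div_of_nonneg_left ?_ ?_ ?_  -- maybe wrong lemma; fallback gcongr
  · positivity
  · positivity
  · exact_mod_cast Nat.factorial_le (by omega)

lemma l2_add_le {L : ℕ} (v u : Fin L → ℂ) : l2 (v + u) ≤ l2 v + l2 u := by
  rw [l2_eq_norm, l2_eq_norm, l2_eq_norm, toE_add]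
  exact norm_add_le _ _

lemma l2_smul {L : ℕ} (a : ℂ) (v : Fin L → ℂ) :
    l2 (fun j => a * v j) = ‖a‖ * l2 v := by
  unfold l2
  rw [← Real.sqrt_sq (norm_nonneg a), ← Real.sqrt_mul (sq_nonneg _), Finset.mul_sum]
  congr 1
  apply Finset.sum_congr rfl
  intro j _
  rw [norm_mul]
  ring

lemma l2_eq_zero {L : ℕ} {v : Fin L → ℂ} (h : l2 v = 0) : v = 0 := by
  unfold l2 at h
  have hnn : ∀ i ∈ Finset.univ, (0:ℝ) ≤ ‖v i‖ ^ 2 := fun i _ => by positivity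
  have hsum : ∑ i, ‖v i‖ ^ 2 = 0 := by
    have := Real.sqrt_eq_zero (Finset.sum_nonneg hnn) |>.mp h
    exact this
  funext j
  have := (Finset.sum_eq_zero_iff_of_nonneg hnn).mp hsum j (Finset.mem_univ j)
  have habs : ‖v j‖ = 0 := by nlinarith [norm_nonneg (v j)]
  simpa using habs

section core
variable {Ω : Type*} [MeasurableSpace Ω] (μ : Measure Ω) [IsProbabilityMeasure μ] {K L : ℕ}

lemma step_ineq (Y Z : Ω → Fin L → ℂ) (hYm : Measurable Y) (hZm : Measurable Z)
    (hYZ : IndepFun Y Z μ) (C bi : ℝ) (hC0 : 0 ≤ C) (hbi : 0 ≤ bi)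
    (hYb : ∀ ω', l2 (Y ω') ≤ C) (hZn : ∀ ω', l2 (Z ω') = bi)
    (hZ0 : ∀ j, ∫ ω', Z ω' j ∂μ = 0) (lam : ℝ) (hlam : 0 ≤ lam) :
    ∫ ω', Real.cosh (lam * l2 (Y ω' + Z ω')) ∂μ ≤
      (∫ ω', Real.cosh (lam * l2 (Y ω')) ∂μ) * Real.cosh (lam * bi) := by
  classical
  -- vector-level auxiliary functions
  set Dv : (Fin L → ℂ) → ℝ := fun v =>
    Real.sinh (lam * l2 v) * Real.sinh (lam * bi) / ((lam * l2 v) * (lam * bi)) with hDv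
  have hDvm : Measurable Dv := by
    have h1 : Continuous fun v : Fin L → ℂ => lam * l2 v := continuous_const.mul l2_continuous
    exact ((Real.continuous_sinh.comp h1).measurable.mul
      measurable_const).div (h1.measurable.mul_const _)
  set DB : ℝ := Real.cosh (lam * C) * Real.cosh (lam * bi) with hDB
  have hDvb : ∀ v : Fin L → ℂ, l2 v ≤ C → |Dv v| ≤ DB := by
    intro v hv
    by_cases hz : (lam * l2 v) * (lam * bi) = 0
    · rw [hDv]
      simp only [hz, div_zero, abs_zero]
      positivity
    · have h1 : 0 < lam * l2 v := by
        rcases mul_ne_zero_iff.mp hz with ⟨h1, _⟩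
        exact lt_of_le_of_ne (mul_nonneg hlam (l2_nonneg _)) (Ne.symm h1)
      have h2 : 0 < lam * bi := by
        rcases mul_ne_zero_iff.mp hz with ⟨_, h2⟩
        exact lt_of_le_of_ne (mul_nonneg hlam hbi) (Ne.symm h2)
      have hre : Dv v = (Real.sinh (lam * l2 v) / (lam * l2 v)) *
          (Real.sinh (lam * bi) / (lam * bi)) := by
        rw [hDv]; field_simp
      rw [hre, abs_of_nonneg (by positivity)]
      have e1 : Real.sinh (lam * l2 v) / (lam * l2 v) ≤ Real.cosh (lam * C) := by
        rw [div_le_iff₀ h1]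
        calc Real.sinh (lam * l2 v) ≤ (lam * l2 v) * Real.cosh (lam * l2 v) :=
              sinh_le_mul_cosh h1.le
          _ ≤ (lam * l2 v) * Real.cosh (lam * C) := by
              have : Real.cosh (lam * l2 v) ≤ Real.cosh (lam * C) := by
                apply Real.cosh_le_cosh.2
                rw [abs_of_nonneg h1.le, abs_of_nonneg (by positivity)]
                exact mul_le_mul_of_nonneg_left hv hlam
              nlinarith [h1]
          _ = Real.cosh (lam * C) * (lam * l2 v) := by ring
      have e2 : Real.sinh (lam * bi) / (lam * bi) ≤ Real.cosh (lam * bi) := by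
        rw [div_le_iff₀ h2]
        calc Real.sinh (lam * bi) ≤ (lam * bi) * Real.cosh (lam * bi) := sinh_le_mul_cosh h2.le
          _ = Real.cosh (lam * bi) * (lam * bi) := by ring
      rw [hDB]
      have p1 : 0 ≤ Real.sinh (lam * l2 v) / (lam * l2 v) := by
        apply div_nonneg (Real.sinh_nonneg_iff.2 h1.le) h1.le
      have p2 : 0 ≤ Real.sinh (lam * bi) / (lam * bi) := by
        apply div_nonneg (Real.sinh_nonneg_iff.2 h2.le) h2.le
      exact mul_le_mul e1 e2 p2 (Real.cosh_pos _).le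
  -- pointwise inequality
  have hpt : ∀ ω', Real.cosh (lam * l2 (Y ω' + Z ω')) ≤
      Real.cosh (lam * l2 (Y ω')) * Real.cosh (lam * bi) +
        (lam^2 * (∑ j, conj (Y ω' j) * Z ω' j).re) * Dv (Y ω') := by
    intro ω'
    have hc0 : 0 ≤ l2 (Y ω') := l2_nonneg _
    have hCS : |(∑ j, conj (Y ω' j) * Z ω' j).re| ≤ l2 (Y ω') * bi := by
      rw [← hZn ω']; exact abs_re_inner_le _ _
    have hsq : (lam * l2 (Y ω' + Z ω'))^2 =
        (lam * l2 (Y ω'))^2 + 2*(lam^2 * (∑ j, conj (Y ω' j) * Z ω' j).re) + (lam * bi)^2 := by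
      rw [mul_pow, l2_add_sq, ← hZn ω']
      ring
    have hnn : 0 ≤ lam * l2 (Y ω' + Z ω') := mul_nonneg hlam (l2_nonneg _)
    have heq : lam * l2 (Y ω' + Z ω') = Real.sqrt ((lam * l2 (Y ω'))^2 +
        2*(lam^2 * (∑ j, conj (Y ω' j) * Z ω' j).re) + (lam * bi)^2) := by
      rw [← hsq, Real.sqrt_sq hnn]
    rw [heq]
    have habs : |lam^2 * (∑ j, conj (Y ω' j) * Z ω' j).re| ≤ (lam * l2 (Y ω')) * (lam * bi) := by
      rw [abs_mul, abs_of_nonneg (sq_nonneg lam)]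
      calc lam^2 * |(∑ j, conj (Y ω' j) * Z ω' j).re| ≤ lam^2 * (l2 (Y ω') * bi) := by
            exact mul_le_mul_of_nonneg_left hCS (sq_nonneg lam)
        _ = (lam * l2 (Y ω')) * (lam * bi) := by ring
    exact chord_bound (mul_nonneg hlam hc0) (mul_nonneg hlam hbi) habs

  -- basic measurability
  have hYjm : ∀ j : Fin L, Measurable fun ω' => Y ω' j := fun j => (measurable_pi_apply j).comp hYm
  have hZjm : ∀ j : Fin L, Measurable fun ω' => Z ω' j := fun j => (measurable_pi_apply j).comp hZm
  have hDYm : Measurable fun ω' => Dv (Y ω') := hDvm.comp hYm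
  have hsRm : Measurable fun ω' => (∑ j, conj (Y ω' j) * Z ω' j).re := by
    apply Complex.measurable_re.comp
    apply Finset.measurable_sum
    intro j _
    exact (Complex.continuous_conj.measurable.comp (hYjm j)).mul (hZjm j)
  have hsRb : ∀ ω', |(∑ j, conj (Y ω' j) * Z ω' j).re| ≤ C * bi := by
    intro ω'
    calc |(∑ j, conj (Y ω' j) * Z ω' j).re| ≤ l2 (Y ω') * l2 (Z ω') := abs_re_inner_le _ _
      _ = l2 (Y ω') * bi := by rw [hZn ω']
      _ ≤ C * bi := mul_le_mul_of_nonneg_right (hYb ω') hbi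
  -- integrability of the three functions
  have hIL : Integrable (fun ω' => Real.cosh (lam * l2 (Y ω' + Z ω'))) μ := by
    apply integrable_of_bound μ _ ?_ (Real.cosh (lam * (C + bi)))
    · intro ω'
      rw [abs_of_pos (Real.cosh_pos _)]
      apply Real.cosh_le_cosh.2
      rw [abs_of_nonneg (mul_nonneg hlam (l2_nonneg _)),
        abs_of_nonneg (mul_nonneg hlam (by linarith))]
      apply mul_le_mul_of_nonneg_left ?_ hlam
      calc l2 (Y ω' + Z ω') ≤ l2 (Y ω') + l2 (Z ω') := l2_add_le _ _
        _ ≤ C + bi := by rw [hZn ω']; exact add_le_add (hYb ω') le_rfl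
    · exact Real.continuous_cosh.measurable.comp
        (measurable_const.mul (l2_continuous.measurable.comp (hYm.add hZm)))
  have hf1 : Integrable (fun ω' => Real.cosh (lam * l2 (Y ω')) * Real.cosh (lam * bi)) μ := by
    apply integrable_of_bound μ _ ?_ DB
    · intro ω'
      rw [hDB, abs_of_pos (mul_pos (Real.cosh_pos _) (Real.cosh_pos _))]
      apply mul_le_mul_of_nonneg_right ?_ (Real.cosh_pos _).le
      apply Real.cosh_le_cosh.2
      rw [abs_of_nonneg (mul_nonneg hlam (l2_nonneg _)),
        abs_of_nonneg (mul_nonneg hlam hC0)]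
      exact mul_le_mul_of_nonneg_left (hYb ω') hlam
    · exact (Real.continuous_cosh.measurable.comp
        (measurable_const.mul (l2_continuous.measurable.comp hYm))).mul_const _
  have hf2 : Integrable (fun ω' =>
      (lam^2 * (∑ j, conj (Y ω' j) * Z ω' j).re) * Dv (Y ω')) μ := by
    apply integrable_of_bound μ _ ?_ ((lam^2 * (C * bi)) * DB)
    · intro ω'
      rw [abs_mul]
      apply mul_le_mul ?_ (hDvb _ (hYb ω')) (abs_nonneg _) (by positivity)
      rw [abs_mul, abs_of_nonneg (sq_nonneg lam)]
      exact mul_le_mul_of_nonneg_left (hsRb ω') (sq_nonneg lam)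
    · exact (measurable_const.mul hsRm).mul hDYm
  -- cross term vanishes
  have hcross : ∫ ω', (lam^2 * (∑ j, conj (Y ω' j) * Z ω' j).re) * Dv (Y ω') ∂μ = 0 := by
    have hrw : (fun ω' => (lam^2 * (∑ j, conj (Y ω' j) * Z ω' j).re) * Dv (Y ω')) =
        fun ω' => ∑ j, ((lam^2 * Dv (Y ω') * (Y ω' j).re) * (Z ω' j).re
            + (lam^2 * Dv (Y ω') * (Y ω' j).im) * (Z ω' j).im) := by
      funext ω'
      rw [Complex.re_sum, Finset.mul_sum, Finset.sum_mul]
      apply Finset.sum_congr rfl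
      intro j _
      simp only [Complex.mul_re, Complex.conj_re, Complex.conj_im]
      ring
    have hg1m : ∀ j : Fin L, Measurable fun ω' => lam^2 * Dv (Y ω') * (Y ω' j).re :=
      fun j => (measurable_const.mul hDYm).mul (Complex.measurable_re.comp (hYjm j))
    have hg2m : ∀ j : Fin L, Measurable fun ω' => lam^2 * Dv (Y ω') * (Y ω' j).im :=
      fun j => (measurable_const.mul hDYm).mul (Complex.measurable_im.comp (hYjm j))
    have hYcb : ∀ ω' (j : Fin L), ‖Y ω' j‖ ≤ C :=
      fun ω' j => (abs_coord_le _ j).trans (hYb ω')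
    have hg1b : ∀ (j : Fin L) ω', |lam^2 * Dv (Y ω') * (Y ω' j).re| ≤ lam^2 * DB * C := by
      intro j ω'
      rw [abs_mul, abs_mul, abs_of_nonneg (sq_nonneg lam)]
      have h1 : |Dv (Y ω')| ≤ DB := hDvb _ (hYb ω')
      have h2 : |(Y ω' j).re| ≤ C := (Complex.abs_re_le_norm _).trans (hYcb ω' j)
      have hDB0 : (0:ℝ) ≤ DB := (abs_nonneg _).trans h1
      calc lam^2 * |Dv (Y ω')| * |(Y ω' j).re| ≤ lam^2 * DB * |(Y ω' j).re| := by
            apply mul_le_mul_of_nonneg_right ?_ (abs_nonneg _)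
            exact mul_le_mul_of_nonneg_left h1 (sq_nonneg lam)
        _ ≤ lam^2 * DB * C := by
            apply mul_le_mul_of_nonneg_left h2 (by positivity)
    have hg2b : ∀ (j : Fin L) ω', |lam^2 * Dv (Y ω') * (Y ω' j).im| ≤ lam^2 * DB * C := by
      intro j ω'
      rw [abs_mul, abs_mul, abs_of_nonneg (sq_nonneg lam)]
      have h1 : |Dv (Y ω')| ≤ DB := hDvb _ (hYb ω')
      have h2 : |(Y ω' j).im| ≤ C := (Complex.abs_im_le_norm _).trans (hYcb ω' j)
      have hDB0 : (0:ℝ) ≤ DB := (abs_nonneg _).trans h1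
      calc lam^2 * |Dv (Y ω')| * |(Y ω' j).im| ≤ lam^2 * DB * |(Y ω' j).im| := by
            apply mul_le_mul_of_nonneg_right ?_ (abs_nonneg _)
            exact mul_le_mul_of_nonneg_left h1 (sq_nonneg lam)
        _ ≤ lam^2 * DB * C := by
            apply mul_le_mul_of_nonneg_left h2 (by positivity)
    have hZreb : ∀ (j : Fin L) ω', |(Z ω' j).re| ≤ bi := fun j ω' =>
      (Complex.abs_re_le_norm _).trans ((abs_coord_le _ j).trans_eq (hZn ω'))
    have hZimb : ∀ (j : Fin L) ω', |(Z ω' j).im| ≤ bi := fun j ω' =>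
      (Complex.abs_im_le_norm _).trans ((abs_coord_le _ j).trans_eq (hZn ω'))
    have hig1 : ∀ j : Fin L, Integrable (fun ω' => lam^2 * Dv (Y ω') * (Y ω' j).re) μ :=
      fun j => integrable_of_bound μ _ (hg1m j) _ (hg1b j)
    have hig2 : ∀ j : Fin L, Integrable (fun ω' => lam^2 * Dv (Y ω') * (Y ω' j).im) μ :=
      fun j => integrable_of_bound μ _ (hg2m j) _ (hg2b j)
    have hiZre : ∀ j : Fin L, Integrable (fun ω' => (Z ω' j).re) μ :=
      fun j => integrable_of_bound μ _ (Complex.measurable_re.comp (hZjm j)) bi (hZreb j)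
    have hiZim : ∀ j : Fin L, Integrable (fun ω' => (Z ω' j).im) μ :=
      fun j => integrable_of_bound μ _ (Complex.measurable_im.comp (hZjm j)) bi (hZimb j)
    have hZrez : ∀ j : Fin L, ∫ ω', (Z ω' j).re ∂μ = 0 := by
      intro j
      have hZji : Integrable (fun ω' => Z ω' j) μ := integrableC_of_bound μ _ (hZjm j) bi
        (fun ω' => by exact (abs_coord_le _ j).trans_eq (hZn ω'))
      calc ∫ ω', (Z ω' j).re ∂μ = Complex.reCLM (∫ ω', Z ω' j ∂μ) :=
            Complex.reCLM.integral_comp_comm hZji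
        _ = 0 := by rw [hZ0 j]; simp
    have hZimz : ∀ j : Fin L, ∫ ω', (Z ω' j).im ∂μ = 0 := by
      intro j
      have hZji : Integrable (fun ω' => Z ω' j) μ := integrableC_of_bound μ _ (hZjm j) bi
        (fun ω' => by exact (abs_coord_le _ j).trans_eq (hZn ω'))
      calc ∫ ω', (Z ω' j).im ∂μ = Complex.imCLM (∫ ω', Z ω' j ∂μ) :=
            Complex.imCLM.integral_comp_comm hZji
        _ = 0 := by rw [hZ0 j]; simp
    have hterm1 : ∀ j : Fin L,
        ∫ ω', (lam^2 * Dv (Y ω') * (Y ω' j).re) * (Z ω' j).re ∂μ = 0 := by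
      intro j
      have hI : IndepFun (fun ω' => lam^2 * Dv (Y ω') * (Y ω' j).re)
          (fun ω' => (Z ω' j).re) μ :=
        hYZ.comp ((measurable_const.mul hDvm).mul
          (Complex.measurable_re.comp (measurable_pi_apply j)))
          (Complex.measurable_re.comp (measurable_pi_apply j))
      have h := hI.integral_fun_mul_eq_mul_integral (hig1 j).aestronglyMeasurable (hiZre j).aestronglyMeasurable
      rw [hZrez j, mul_zero] at h
      exact h
    have hterm2 : ∀ j : Fin L,
        ∫ ω', (lam^2 * Dv (Y ω') * (Y ω' j).im) * (Z ω' j).im ∂μ = 0 := by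
      intro j
      have hI : IndepFun (fun ω' => lam^2 * Dv (Y ω') * (Y ω' j).im)
          (fun ω' => (Z ω' j).im) μ :=
        hYZ.comp ((measurable_const.mul hDvm).mul
          (Complex.measurable_im.comp (measurable_pi_apply j)))
          (Complex.measurable_im.comp (measurable_pi_apply j))
      have h := hI.integral_fun_mul_eq_mul_integral (hig2 j).aestronglyMeasurable (hiZim j).aestronglyMeasurable
      rw [hZimz j, mul_zero] at h
      exact h
    have hiprod1 : ∀ j : Fin L,
        Integrable (fun ω' => (lam^2 * Dv (Y ω') * (Y ω' j).re) * (Z ω' j).re) μ := by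
      intro j
      apply integrable_of_bound μ _ ((hg1m j).mul (Complex.measurable_re.comp (hZjm j)))
        ((lam^2 * DB * C) * bi)
      intro ω'
      rw [Pi.mul_apply]
      rw [abs_mul]
      exact mul_le_mul (hg1b j ω') (hZreb j ω') (abs_nonneg _)
        (le_trans (abs_nonneg _) (hg1b j ω'))
    have hiprod2 : ∀ j : Fin L,
        Integrable (fun ω' => (lam^2 * Dv (Y ω') * (Y ω' j).im) * (Z ω' j).im) μ := by
      intro j
      apply integrable_of_bound μ _ ((hg2m j).mul (Complex.measurable_im.comp (hZjm j)))
        ((lam^2 * DB * C) * bi)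
      intro ω'
      rw [Pi.mul_apply]
      rw [abs_mul]
      exact mul_le_mul (hg2b j ω') (hZimb j ω') (abs_nonneg _)
        (le_trans (abs_nonneg _) (hg2b j ω'))
    have hiadd : ∀ j : Fin L, Integrable (fun ω' =>
        (lam^2 * Dv (Y ω') * (Y ω' j).re) * (Z ω' j).re
          + (lam^2 * Dv (Y ω') * (Y ω' j).im) * (Z ω' j).im) μ :=
      fun j => (hiprod1 j).add (hiprod2 j)
    rw [hrw]
    rw [integral_finset_sum _ (fun j _ => hiadd j)]
    apply Finset.sum_eq_zero
    intro j _
    rw [integral_add (hiprod1 j) (hiprod2 j), hterm1 j, hterm2 j, add_zero]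
  -- put everything together
  calc ∫ ω', Real.cosh (lam * l2 (Y ω' + Z ω')) ∂μ
      ≤ ∫ ω', (Real.cosh (lam * l2 (Y ω')) * Real.cosh (lam * bi) +
          (lam^2 * (∑ j, conj (Y ω' j) * Z ω' j).re) * Dv (Y ω')) ∂μ := by
        apply integral_mono hIL (hf1.add hf2)
        intro ω'
        exact hpt ω'
    _ = (∫ ω', Real.cosh (lam * l2 (Y ω')) * Real.cosh (lam * bi) ∂μ) +
        ∫ ω', (lam^2 * (∑ j, conj (Y ω' j) * Z ω' j).re) * Dv (Y ω') ∂μ :=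
        integral_add hf1 hf2
    _ = (∫ ω', Real.cosh (lam * l2 (Y ω')) ∂μ) * Real.cosh (lam * bi) := by
        rw [hcross, add_zero, integral_mul_const]

lemma pinelis_step
    (X : Fin K → Ω → (Fin L → ℂ))
    (hXm : ∀ k, Measurable (X k))
    (hind : iIndepFun X μ)
    (b : Fin K → ℝ) (hb : ∀ k, 0 ≤ b k)
    (hXn : ∀ k ω', l2 (X k ω') = b k)
    (hX0 : ∀ k j, ∫ ω', X k ω' j ∂μ = 0)
    (lam : ℝ) (hlam : 0 ≤ lam) (s : Finset (Fin K)) :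
    ∫ ω', Real.cosh (lam * l2 (∑ k ∈ s, X k ω')) ∂μ ≤ ∏ k ∈ s, Real.cosh (lam * b k) := by
  classical
  induction s using Finset.induction_on with
  | empty => simp [l2]
  | @insert i s hi IH =>
    have hYm : Measurable (fun ω' => ∑ k ∈ s, X k ω') := Finset.measurable_sum s (fun k _ => hXm k)
    have hYZ : IndepFun (fun ω' => ∑ k ∈ s, X k ω') (X i) μ := by
      have h := hind.indepFun_finsetSum_of_notMem hXm hi
      have he : (∑ j ∈ s, X j) = fun ω' => ∑ k ∈ s, X k ω' := by
        funext ω'; simp [Finset.sum_apply]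
      rwa [he] at h
    have key := step_ineq μ (fun ω' => ∑ k ∈ s, X k ω') (X i) hYm (hXm i) hYZ
      (∑ k ∈ s, b k) (b i) (Finset.sum_nonneg fun k _ => hb k) (hb i)
      (fun ω' => (l2_sum_le s fun k => X k ω').trans
        (le_of_eq (Finset.sum_congr rfl fun k _ => hXn k ω')))
      (fun ω' => hXn i ω') (fun j => hX0 i j) lam hlam
    calc ∫ ω', Real.cosh (lam * l2 (∑ k ∈ insert i s, X k ω')) ∂μ
        = ∫ ω', Real.cosh (lam * l2 ((∑ k ∈ s, X k ω') + X i ω')) ∂μ := by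
          congr 1; funext ω'
          rw [Finset.sum_insert hi, add_comm]
      _ ≤ (∫ ω', Real.cosh (lam * l2 (∑ k ∈ s, X k ω')) ∂μ) * Real.cosh (lam * b i) := key
      _ ≤ (∏ k ∈ s, Real.cosh (lam * b k)) * Real.cosh (lam * b i) :=
          mul_le_mul_of_nonneg_right IH (Real.cosh_pos _).le
      _ = ∏ k ∈ insert i s, Real.cosh (lam * b k) := by rw [Finset.prod_insert hi]; ring

end core

/-- vector-form Hoeffding inequality: if the rows of `Ψ ∈ ℂ^{K×L}` are
independent zero-mean unit vectors, then for any fixed nonzero `ω ∈ ℂ^K` and `t > 0`,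
`P(‖ωᴴΨ‖₂ ≥ t) ≤ (L+1) exp(−t²/(8‖ω‖₂²))`. -/
theorem vector_hoeffding
    {Ω : Type*} [MeasurableSpace Ω] (μ : Measure Ω) [IsProbabilityMeasure μ]
    (K L : ℕ) (Ψ : Fin K → Ω → (Fin L → ℂ))
    (hmeas : ∀ k, Measurable (Ψ k))
    (hind : iIndepFun Ψ μ)
    (hsphere : ∀ k ω', l2 (Ψ k ω') = 1)
    (hmean : ∀ k t, ∫ ω', Ψ k ω' t ∂μ = 0)
    (w : Fin K → ℂ) (hw : w ≠ 0) (t : ℝ) (ht : 0 < t) :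
    μ {ω' | t ≤ l2 (fun j => ∑ k, conj (w k) * Ψ k ω' j)}
      ≤ ENNReal.ofReal (((L : ℝ) + 1) * Real.exp (-t ^ 2 / (8 * (l2 w) ^ 2))) := by
  classical
  rcases Nat.eq_zero_or_pos L with hL | hL
  · subst hL
    have hempty : {ω' : Ω | t ≤ l2 (fun j : Fin 0 => ∑ k, conj (w k) * Ψ k ω' j)} = ∅ := by
      ext ω'
      simp only [Set.mem_setOf_eq, Set.mem_empty_iff_false, iff_false, not_le]
      have : l2 (fun j : Fin 0 => ∑ k, conj (w k) * Ψ k ω' j) = 0 := by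
        simp [l2]
      rw [this]; exact ht
    rw [hempty]
    simp only [measure_empty]
    positivity
  · -- main case
    set σ2 : ℝ := (l2 w) ^ 2 with hσ2
    have hl2w : 0 < l2 w := by
      rcases lt_or_eq_of_le (l2_nonneg w) with h | h
      · exact h
      · exact absurd (l2_eq_zero h.symm) hw
    have hσpos : 0 < σ2 := by positivity
    set lam : ℝ := t / σ2 with hlam_def
    have hlam : 0 < lam := div_pos ht hσpos
    set X : Fin K → Ω → (Fin L → ℂ) := fun k ω' => fun j => conj (w k) * Ψ k ω' j with hXdef
    have hXm : ∀ k, Measurable (X k) := by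
      intro k
      apply measurable_pi_lambda
      intro j
      exact measurable_const.mul ((measurable_pi_apply j).comp (hmeas k))
    have hind' : iIndepFun X μ := by
      have h := hind.comp (fun k (v : Fin L → ℂ) => (fun j => conj (w k) * v j))
        (fun k => measurable_pi_lambda _ fun j => measurable_const.mul (measurable_pi_apply j))
      exact h
    have hXn : ∀ k ω', l2 (X k ω') = ‖w k‖ := by
      intro k ω'
      rw [hXdef]
      simp only
      rw [l2_smul, hsphere k ω', mul_one, Complex.norm_conj]
    have hX0 : ∀ k j, ∫ ω', X k ω' j ∂μ = 0 := by
      intro k j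
      rw [hXdef]
      simp only
      rw [integral_const_mul, hmean k j, mul_zero]
    have key := pinelis_step μ X hXm hind' (fun k => ‖w k‖)
      (fun k => norm_nonneg _) hXn hX0 lam hlam.le Finset.univ
    have hsum2 : ∑ k, ‖w k‖ ^ 2 = σ2 := by
      rw [hσ2]
      unfold l2
      rw [Real.sq_sqrt (Finset.sum_nonneg fun i _ => by positivity)]
    have hprod : ∏ k, Real.cosh (lam * ‖w k‖) ≤ Real.exp (lam ^ 2 * σ2 / 2) := by
      calc ∏ k, Real.cosh (lam * ‖w k‖)
          ≤ ∏ k, Real.exp ((lam * ‖w k‖) ^ 2 / 2) :=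
            Finset.prod_le_prod (fun k _ => (Real.cosh_pos _).le)
              (fun k _ => Real.cosh_le_exp_half_sq _)
        _ = Real.exp (∑ k, (lam * ‖w k‖) ^ 2 / 2) := by
            rw [Real.exp_sum]
        _ = Real.exp (lam ^ 2 * σ2 / 2) := by
            congr 1
            have : ∀ k : Fin K, (lam * ‖w k‖) ^ 2 / 2
                = lam ^ 2 / 2 * (‖w k‖ ^ 2) := by intro k; ring
            simp_rw [this]
            rw [← Finset.mul_sum, hsum2]
            ring
    -- the norm function
    have hSeq : ∀ ω', (fun j => ∑ k, conj (w k) * Ψ k ω' j) = ∑ k ∈ Finset.univ, X k ω' := by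
      intro ω'
      funext j
      rw [Finset.sum_apply]
    set f : Ω → ℝ := fun ω' => Real.cosh (lam * l2 (∑ k ∈ Finset.univ, X k ω')) with hfdef
    have hfm : Measurable f := by
      apply Real.continuous_cosh.measurable.comp
      exact measurable_const.mul (l2_continuous.measurable.comp
        (Finset.measurable_sum _ fun k _ => hXm k))
    have hfb : ∀ ω', |f ω'| ≤ Real.cosh (lam * ∑ k, ‖w k‖) := by
      intro ω'
      rw [hfdef]
      simp only
      rw [abs_of_pos (Real.cosh_pos _)]
      apply Real.cosh_le_cosh.2
      have hC0 : (0:ℝ) ≤ ∑ k, ‖w k‖ :=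
        Finset.sum_nonneg fun k _ => norm_nonneg _
      rw [abs_of_nonneg (mul_nonneg hlam.le (l2_nonneg _)),
        abs_of_nonneg (mul_nonneg hlam.le hC0)]
      apply mul_le_mul_of_nonneg_left ?_ hlam.le
      exact (l2_sum_le _ fun k => X k ω').trans
        (le_of_eq (Finset.sum_congr rfl fun k _ => hXn k ω'))
    have hfi : Integrable f μ := integrable_of_bound μ f hfm _ hfb
    have hf0 : 0 ≤ᵐ[μ] f := Filter.Eventually.of_forall fun ω' => (Real.cosh_pos _).le
    have hmarkov := mul_meas_ge_le_integral_of_nonneg hf0 hfi (Real.cosh (lam * t))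
    set B := {ω' | Real.cosh (lam * t) ≤ f ω'} with hBdef
    have hAB : {ω' | t ≤ l2 (fun j => ∑ k, conj (w k) * Ψ k ω' j)} ⊆ B := by
      intro ω' hω'
      simp only [Set.mem_setOf_eq] at hω'
      show Real.cosh (lam * t) ≤ Real.cosh (lam * l2 (∑ k ∈ Finset.univ, X k ω'))
      apply Real.cosh_le_cosh.2
      rw [← hSeq ω']
      have h1 : 0 ≤ lam * t := mul_nonneg hlam.le ht.le
      rw [abs_of_nonneg h1, abs_of_nonneg (mul_nonneg hlam.le (l2_nonneg _))]
      exact mul_le_mul_of_nonneg_left hω' hlam.le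
    have hBfin : μ B ≠ ⊤ := measure_ne_top μ B
    have hcosh_lb : Real.exp (lam * t) / 2 ≤ Real.cosh (lam * t) := by
      rw [Real.cosh_eq]
      have : (0:ℝ) < Real.exp (-(lam * t)) := Real.exp_pos _
      linarith
    have hBle : (μ B).toReal ≤ 2 * Real.exp (- t ^ 2 / (2 * σ2)) := by
      have hIf : ∫ ω', f ω' ∂μ ≤ Real.exp (lam ^ 2 * σ2 / 2) := key.trans hprod
      have h2 : Real.cosh (lam * t) * (μ B).toReal ≤ Real.exp (lam ^ 2 * σ2 / 2) :=
        hmarkov.trans hIf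
      have hcpos : 0 < Real.cosh (lam * t) := Real.cosh_pos _
      have h3 : (μ B).toReal ≤ Real.exp (lam ^ 2 * σ2 / 2) / Real.cosh (lam * t) := by
        rw [le_div_iff₀ hcpos]
        linarith [h2]
      refine h3.trans ?_
      have hexp_pos : (0:ℝ) < Real.exp (lam * t) / 2 := by positivity
      calc Real.exp (lam ^ 2 * σ2 / 2) / Real.cosh (lam * t)
          ≤ Real.exp (lam ^ 2 * σ2 / 2) / (Real.exp (lam * t) / 2) := by
            apply div_le_div_of_nonneg_left (Real.exp_pos _).le hexp_pos hcosh_lb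
        _ = 2 * Real.exp (lam ^ 2 * σ2 / 2 - lam * t) := by
            rw [Real.exp_sub]; ring
        _ = 2 * Real.exp (- t ^ 2 / (2 * σ2)) := by
            congr 1
            congr 1
            rw [hlam_def]
            field_simp
            ring
    have hfinal : 2 * Real.exp (- t ^ 2 / (2 * σ2)) ≤
        ((L : ℝ) + 1) * Real.exp (-t ^ 2 / (8 * (l2 w) ^ 2)) := by
      have h2L : (2:ℝ) ≤ (L : ℝ) + 1 := by
        have : (1:ℝ) ≤ (L : ℝ) := by exact_mod_cast hL
        linarith
      have hexp : Real.exp (- t ^ 2 / (2 * σ2)) ≤ Real.exp (-t ^ 2 / (8 * (l2 w) ^ 2)) := by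
        apply Real.exp_le_exp.2
        rw [hσ2]
        rw [div_le_div_iff₀ (by positivity) (by positivity)]
        nlinarith [sq_nonneg t, hl2w, sq_nonneg (l2 w)]
      calc 2 * Real.exp (- t ^ 2 / (2 * σ2))
          ≤ 2 * Real.exp (-t ^ 2 / (8 * (l2 w) ^ 2)) := by
            apply mul_le_mul_of_nonneg_left hexp (by norm_num)
        _ ≤ ((L : ℝ) + 1) * Real.exp (-t ^ 2 / (8 * (l2 w) ^ 2)) :=
            mul_le_mul_of_nonneg_right h2L (Real.exp_pos _).le
    calc μ {ω' | t ≤ l2 (fun j => ∑ k, conj (w k) * Ψ k ω' j)}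
        ≤ μ B := measure_mono hAB
      _ = ENNReal.ofReal ((μ B).toReal) := (ENNReal.ofReal_toReal hBfin).symm
      _ ≤ ENNReal.ofReal (2 * Real.exp (- t ^ 2 / (2 * σ2))) := ENNReal.ofReal_le_ofReal hBle
      _ ≤ ENNReal.ofReal (((L : ℝ) + 1) * Real.exp (-t ^ 2 / (8 * (l2 w) ^ 2))) :=
          ENNReal.ofReal_le_ofReal hfinal
end

section
/- Bernstein's inequality for polynomials: if p is a complex polynomial of degree at most m, then sup_{|z|=1} |p'(z)| ≤ m · sup_{|z|=1} |p(z)|. -/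
open Polynomial Complex

open Polynomial Complex

/-- positive real part of z/(z-r) on the unit circle when |r|<1 -/
lemma aux_re_pos {z r : ℂ} (hz : ‖z‖ = 1) (hr : ‖r‖ < 1) :
    0 < (z * (z - r)⁻¹).re := by
  have hw : z - r ≠ 0 := by
    intro h
    have : z = r := sub_eq_zero.mp h
    rw [← this, hz] at hr; exact lt_irrefl 1 hr
  have hinv : (z - r)⁻¹ = (starRingEnd ℂ) (z - r) * (((Complex.normSq (z - r))⁻¹ : ℝ) : ℂ) :=
    Complex.inv_def (z - r)
  have hns : 0 < Complex.normSq (z - r) := Complex.normSq_pos.mpr hw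
  have key : 0 < (z * (starRingEnd ℂ) (z - r)).re := by
    have h1 : z * (starRingEnd ℂ) (z - r) = (Complex.normSq z : ℂ) - z * (starRingEnd ℂ) r := by
      rw [map_sub, mul_sub, Complex.mul_conj]
    have h2 : (z * (starRingEnd ℂ) r).re ≤ ‖z * (starRingEnd ℂ) r‖ :=
      Complex.re_le_norm _
    have h3 : ‖z * (starRingEnd ℂ) r‖ = ‖r‖ := by
      rw [norm_mul, Complex.norm_conj, hz, one_mul]
    have h4 : Complex.normSq z = 1 := by
      rw [Complex.normSq_eq_norm_sq, hz, one_pow]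
    rw [h1, h4]
    simp only [Complex.sub_re, Complex.one_re]
    push_cast
    simp only [Complex.sub_re, Complex.one_re]
    nlinarith [h2, h3, hr]
  rw [hinv, ← mul_assoc, mul_comm (z * (starRingEnd ℂ) (z - r)) _,
    Complex.re_ofReal_mul]
  positivity

lemma aux_msum_pos : ∀ (T : Multiset ℝ), T ≠ 0 → (∀ x ∈ T, 0 < x) → 0 < T.sum := by
  intro T
  induction T using Multiset.induction with
  | empty => intro h; exact absurd rfl h
  | cons a s ih =>
    intro _ h
    rw [Multiset.sum_cons]
    rcases eq_or_ne s 0 with rfl | hs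
    · simpa using h a (by simp)
    · have h1 := ih hs (fun x hx => h x (Multiset.mem_cons_of_mem hx))
      have h2 := h a (Multiset.mem_cons_self a s)
      linarith

lemma aux_re_msum : ∀ (T : Multiset ℂ), T.sum.re = (T.map Complex.re).sum := by
  intro T
  induction T using Multiset.induction with
  | empty => simp
  | cons a s ih => simp [ih]

/-- if all elements of `S` have modulus `< 1`, `S ≠ 0`, and `|z| = 1`, then the derivative of
`∏ (X - r)` does not vanish at `z`. -/
lemma aux_deriv_ne_zero (S : Multiset ℂ) (z : ℂ) (hS : S ≠ 0) (hz : ‖z‖ = 1)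
    (hlt : ∀ r ∈ S, ‖r‖ < 1) :
    Polynomial.eval z (Polynomial.derivative (S.map (fun a => X - C a)).prod) ≠ 0 := by
  classical
  have hfac : ∀ r : ℂ, ‖r‖ < 1 → z - r ≠ 0 := by
    intro r hr h
    have : z = r := sub_eq_zero.mp h
    rw [← this, hz] at hr; exact lt_irrefl 1 hr
  set P := (S.map (fun a => X - C a)).prod with hP
  set Pz := Polynomial.eval z P with hPzdef
  have hPne : Pz ≠ 0 := by
    rw [hPzdef, hP, eval_multiset_prod, Multiset.map_map]
    refine Multiset.prod_ne_zero ?_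
    intro h0
    rcases Multiset.mem_map.mp h0 with ⟨r, hrS, hr0⟩
    exact hfac r (hlt r hrS) (by simpa using hr0)
  -- eval of derivative
  have hder : Polynomial.eval z (Polynomial.derivative P) =
      (S.map (fun r => Polynomial.eval z ((S.erase r).map (fun a => X - C a)).prod)).sum := by
    rw [hP, derivative_prod]
    rw [show Polynomial.eval z
        ((S.map (fun i => ((S.erase i).map (fun a => X - C a)).prod * Polynomial.derivative (X - C i))).sum)
        = ((S.map (fun i => ((S.erase i).map (fun a => X - C a)).prod * Polynomial.derivative (X - C i))).map (Polynomial.eval z)).sum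
      from map_multiset_sum (Polynomial.evalRingHom z) _]
    rw [Multiset.map_map]
    refine congrArg Multiset.sum (Multiset.map_congr rfl ?_)
    intro r _
    simp
  -- each term equals Pz * (z - r)⁻¹
  have hterm : ∀ r ∈ S, Polynomial.eval z ((S.erase r).map (fun a => X - C a)).prod
      = Pz * (z - r)⁻¹ := by
    intro r hrS
    have hzr : z - r ≠ 0 := hfac r (hlt r hrS)
    have hcons : Pz = (z - r) * Polynomial.eval z ((S.erase r).map (fun a => X - C a)).prod := by
      rw [hPzdef, hP]
      nth_rewrite 1 [← Multiset.cons_erase hrS]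
      rw [Multiset.map_cons, Multiset.prod_cons, eval_mul]
      simp
    rw [hcons]
    field_simp
  have hsum : z * Polynomial.eval z (Polynomial.derivative P) * Pz⁻¹ =
      (S.map (fun r => z * (z - r)⁻¹)).sum := by
    rw [hder, Multiset.map_congr rfl hterm, Multiset.sum_map_mul_left,
      Multiset.sum_map_mul_left]
    field_simp
  have hre : 0 < (z * Polynomial.eval z (Polynomial.derivative P) * Pz⁻¹).re := by
    rw [hsum, aux_re_msum, Multiset.map_map]
    refine aux_msum_pos _ (by simpa using hS) ?_
    intro x hx
    rcases Multiset.mem_map.mp hx with ⟨r, hrS, rfl⟩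
    exact aux_re_pos hz (hlt r hrS)
  intro h0
  rw [h0] at hre
  simp at hre


/-- Bernstein's inequality for polynomials: if `p` is a complex polynomial
of degree at most `m`, then `sup_{|z|=1} |p'(z)| ≤ m · sup_{|z|=1} |p(z)|`. -/
theorem bernstein_polynomial_inequality (m : ℕ) (p : Polynomial ℂ)
    (hdeg : p.natDegree ≤ m) (M : ℝ)
    (hM : ∀ w : ℂ, ‖w‖ = 1 → ‖p.eval w‖ ≤ M) :
    ∀ z : ℂ, ‖z‖ = 1 →
      ‖(Polynomial.derivative p).eval z‖ ≤ m * M := by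
  have hM0 : 0 ≤ M := le_trans (norm_nonneg _) (hM 1 (by simp))
  set q : Polynomial ℂ := Polynomial.reflect m p with hq
  -- the reflection identity
  have hrefl : ∀ w : ℂ, w ≠ 0 → q.eval w⁻¹ * w ^ m = p.eval w := by
    intro w hw
    letI : Invertible w := invertibleOfNonzero hw
    have h := Polynomial.eval₂_reflect_mul_pow (RingHom.id ℂ) w m p hdeg
    rw [invOf_eq_inv] at h; exact h
  -- q is bounded by M on the circle
  have hqcirc : ∀ ζ : ℂ, ‖ζ‖ = 1 → ‖q.eval ζ‖ ≤ M := by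
    intro ζ hζ
    have hζ0 : ζ ≠ 0 := by intro h; rw [h] at hζ; simp at hζ
    have h := hrefl ζ⁻¹ (inv_ne_zero hζ0)
    rw [inv_inv] at h
    have habs : ‖ζ⁻¹‖ = 1 := by rw [norm_inv, hζ]; norm_num
    calc ‖q.eval ζ‖ = ‖q.eval ζ‖ * ‖ζ⁻¹‖ ^ m := by
          rw [habs]; ring
      _ = ‖q.eval ζ * (ζ⁻¹) ^ m‖ := by rw [norm_mul, norm_pow]
      _ = ‖p.eval ζ⁻¹‖ := by rw [h]
      _ ≤ M := hM _ habs
  -- maximum modulus: q bounded by M on the closed disc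
  have hqdisc : ∀ ζ : ℂ, ‖ζ‖ ≤ 1 → ‖q.eval ζ‖ ≤ M := by
    intro ζ hζ
    have hb : Bornology.IsBounded (Metric.ball (0:ℂ) 1) := Metric.isBounded_ball
    have hdc : DiffContOnCl ℂ (fun x => q.eval x) (Metric.ball (0:ℂ) 1) :=
      (q.differentiable).diffContOnCl
    have hfr : ∀ x ∈ frontier (Metric.ball (0:ℂ) 1), ‖q.eval x‖ ≤ M := by
      intro x hx
      rw [frontier_ball (0:ℂ) one_ne_zero, mem_sphere_zero_iff_norm] at hx
      exact hqcirc x hx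
    have hcl : ζ ∈ closure (Metric.ball (0:ℂ) 1) := by
      rw [closure_ball (0:ℂ) one_ne_zero, mem_closedBall_zero_iff]
      exact hζ
    exact Complex.norm_le_of_forall_mem_frontier_norm_le hb hdc hfr hcl
  -- the leading coefficient bound
  have hcoeff : ‖p.coeff m‖ ≤ M := by
    have h0 : q.eval 0 = p.coeff m := by
      rw [← Polynomial.coeff_zero_eq_eval_zero, hq, Polynomial.coeff_reflect,
        Polynomial.revAt_le (Nat.zero_le m)]
      simp
    have := hqdisc 0 (by simp)
    rwa [h0] at this
  intro z hz
  rcases Nat.eq_zero_or_pos m with rfl | hm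
  · -- m = 0 : p is constant
    have : p = Polynomial.C (p.coeff 0) :=
      Polynomial.eq_C_of_natDegree_eq_zero (Nat.le_zero.mp hdeg)
    rw [this]
    simp
  -- main case
  by_contra hcon
  push_neg at hcon
  have hz0 : z ≠ 0 := by intro h; rw [h] at hz; simp at hz
  have hD : (m : ℂ) * z ^ (m - 1) ≠ 0 := by
    apply mul_ne_zero
    · exact_mod_cast Nat.cast_ne_zero.mpr (Nat.pos_iff_ne_zero.mp hm)
    · exact pow_ne_zero _ hz0
  set c : ℂ := (Polynomial.derivative p).eval z / ((m : ℂ) * z ^ (m - 1)) with hc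
  have hcD : c * ((m : ℂ) * z ^ (m - 1)) = (Polynomial.derivative p).eval z :=
    div_mul_cancel₀ _ hD
  have hcabs : M < ‖c‖ := by
    rw [hc, norm_div, norm_mul, norm_pow, hz, one_pow, mul_one]
    have hmabs : (0:ℝ) < ‖(m:ℂ)‖ := by
      rw [Complex.norm_natCast]; exact_mod_cast hm
    rw [lt_div_iff₀ hmabs]
    calc M * ‖(m : ℂ)‖ = (m : ℝ) * M := by
          rw [Complex.norm_natCast]; ring
      _ < _ := hcon
  set f : Polynomial ℂ := p - Polynomial.C c * Polynomial.X ^ m with hf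
  have hfm : f.coeff m = p.coeff m - c := by
    rw [hf]
    simp [Polynomial.coeff_C_mul, Polynomial.coeff_X_pow]
  have hne : f.coeff m ≠ 0 := by
    intro h
    rw [hfm, sub_eq_zero] at h
    rw [← h] at hcabs
    exact absurd hcoeff (not_le.mpr hcabs)
  have hf0 : f ≠ 0 := fun h => hne (by rw [h]; simp)
  have hfdeg : f.natDegree = m := by
    refine le_antisymm ?_ (Polynomial.le_natDegree_of_ne_zero hne)
    refine le_trans (Polynomial.natDegree_sub_le _ _) ?_
    refine max_le hdeg (le_trans (Polynomial.natDegree_C_mul_le _ _) ?_)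
    simp
  have hsplit : Polynomial.Splits f := IsAlgClosed.splits f
  have hcard : Multiset.card f.roots = m := by
    have h := hsplit.natDegree_eq_card_roots
    rw [hfdeg] at h
    exact h.symm
  have hroots_lt : ∀ r ∈ f.roots, ‖r‖ < 1 := by
    intro r hr
    by_contra hge
    push_neg at hge
    have hr0 : r ≠ 0 := by
      intro h; rw [h] at hge; simp at hge; linarith
    have hev : p.eval r = c * r ^ m := by
      have h1 : Polynomial.eval r f = 0 := (Polynomial.mem_roots hf0).mp hr
      rw [hf] at h1
      simp only [Polynomial.eval_sub, Polynomial.eval_mul, Polynomial.eval_C,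
        Polynomial.eval_pow, Polynomial.eval_X] at h1
      linear_combination h1
    have hqr : ‖q.eval r⁻¹‖ ≤ M := by
      refine hqdisc _ ?_
      rw [norm_inv]
      exact inv_le_one_of_one_le₀ hge
    have hid := hrefl r hr0
    have : ‖c‖ * ‖r‖ ^ m ≤ M * ‖r‖ ^ m := by
      calc ‖c‖ * ‖r‖ ^ m = ‖c * r ^ m‖ := by
            rw [norm_mul, norm_pow]
        _ = ‖p.eval r‖ := by rw [hev]
        _ = ‖q.eval r⁻¹‖ * ‖r‖ ^ m := by
            rw [← hid, norm_mul, norm_pow]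
        _ ≤ M * ‖r‖ ^ m := by
            refine mul_le_mul_of_nonneg_right hqr (by positivity)
    have hrp : (0:ℝ) < ‖r‖ ^ m := by positivity
    have : ‖c‖ ≤ M := le_of_mul_le_mul_right this hrp
    exact absurd this (not_le.mpr hcabs)
  have hSne : f.roots ≠ 0 := by
    intro h
    rw [h] at hcard
    simp at hcard
    omega
  have hfactor : f = Polynomial.C f.leadingCoeff *
      (f.roots.map fun a => Polynomial.X - Polynomial.C a).prod :=
    hsplit.eq_prod_roots
  have hlc : f.leadingCoeff ≠ 0 := Polynomial.leadingCoeff_ne_zero.mpr hf0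
  -- derivative of f at z is zero
  have hdz : (Polynomial.derivative f).eval z = 0 := by
    rw [hf]
    rw [Polynomial.derivative_sub, Polynomial.derivative_C_mul, Polynomial.derivative_X_pow]
    simp only [Polynomial.eval_sub, Polynomial.eval_mul, Polynomial.eval_C,
      Polynomial.eval_pow, Polynomial.eval_X, Polynomial.eval_natCast]
    rw [← hcD]
    ring
  -- but the derivative of f at z is nonzero
  have hdnz : (Polynomial.derivative f).eval z ≠ 0 := by
    rw [hfactor, Polynomial.derivative_C_mul, Polynomial.eval_mul, Polynomial.eval_C]
    exact mul_ne_zero hlc (aux_deriv_ne_zero f.roots z hSne hz hroots_lt)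
  exact hdnz hdz
end
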